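/- arXiv:1509.06499 — 2 statements merged into one kernel-verified Lean document; each statement's English description precedes it below -/
import Mathlib

section
/- For every ε > 0 and every 0 < c₀ ≤ C there exists δ > 0 with the following property. For b₁, b₂ ∈ (0, δ) and c ∈ [c₀, C], define ℓ(c) = log( x(c) + √(x(c)² − 1) ), where x(c) = (cosh(c/2) + cosh(b₁/2)·cosh(b₂/2)) / (sinh(b₁/2)·sinh(b₂/2)). Then for all c, c' ∈ [c₀, C], ℓ(c') / ℓ(c) ≤ (1 + ε) · max{ c'/c , 1 }. (This is the key estimate showing that the ratio of lengths of an orthogeodesic arc on two hyperbolic structures is controlled, up to a factor 1 + o(1), by the ratio of the lengths of the associated interior closed geodesic, as the boundary lengths tend to 0.) -/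
open Real

/-- Key estimate: the ratio of orthogeodesic arc lengths on two hyperbolic pairs of
pants (with third boundary lengths `c`, `c'` in a compact interval of `(0, ∞)`) is
controlled, up to a `1 + ε` factor, by `max (c'/c) 1`, once the two common boundary
lengths `b₁, b₂` are small enough. -/
theorem arc_ratio_estimate (ε : ℝ) (hε : 0 < ε) (c₀ C : ℝ)
    (hc₀ : 0 < c₀) (hc₀C : c₀ ≤ C) :
    ∃ δ > 0, ∀ b₁ b₂ : ℝ, b₁ ∈ Set.Ioo 0 δ → b₂ ∈ Set.Ioo 0 δ →
      ∀ c ∈ Set.Icc c₀ C, ∀ c' ∈ Set.Icc c₀ C,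
        (fun ℓ : ℝ → ℝ => ℓ c' / ℓ c ≤ (1 + ε) * max (c' / c) 1)
          (fun c : ℝ =>
            (fun x : ℝ => Real.log (x + Real.sqrt (x ^ 2 - 1)))
              ((Real.cosh (c / 2) + Real.cosh (b₁ / 2) * Real.cosh (b₂ / 2)) /
                (Real.sinh (b₁ / 2) * Real.sinh (b₂ / 2)))) := by
  set B : ℝ := Real.cosh (C / 2) + Real.cosh (1 / 2) ^ 2 with hBdef
  have hB4 : (2:ℝ) ≤ B := by
    have h1 := Real.one_le_cosh (C / 2)
    have h2 := Real.one_le_cosh (1 / 2 : ℝ)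
    have h2sq : (1:ℝ) ≤ Real.cosh (1 / 2 : ℝ) ^ 2 := one_le_pow₀ h2
    rw [hBdef]
    linarith
  set A : ℝ := Real.log (2 * B) with hAdef
  have hA0 : 0 ≤ A := by
    rw [hAdef]; apply Real.log_nonneg; nlinarith
  refine ⟨min 1 (2 * Real.arsinh (Real.exp (-A / (2 * ε)))), ?_, ?_⟩
  · apply lt_min one_pos
    have : 0 < Real.arsinh (Real.exp (-A / (2 * ε))) := by
      rw [← Real.sinh_lt_sinh, Real.sinh_zero, Real.sinh_arsinh]
      exact Real.exp_pos _
    linarith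
  rintro b₁ b₂ ⟨hb₁0, hb₁δ⟩ ⟨hb₂0, hb₂δ⟩ c ⟨hc1, hc2⟩ c' ⟨hc'1, hc'2⟩
  simp only []
  set s : ℝ := Real.sinh (b₁ / 2) * Real.sinh (b₂ / 2) with hsdef
  have hsinh_pos : ∀ b : ℝ, 0 < b → 0 < Real.sinh (b / 2) := by
    intro b hb
    rw [← Real.sinh_zero, Real.sinh_lt_sinh]; linarith
  have hs0 : 0 < s := mul_pos (hsinh_pos _ hb₁0) (hsinh_pos _ hb₂0)
  have hsinh_le : ∀ b : ℝ, 0 < b → b < min 1 (2 * Real.arsinh (Real.exp (-A / (2 * ε)))) →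
      Real.sinh (b / 2) ≤ Real.exp (-A / (2 * ε)) := by
    intro b hb hbδ
    have : b / 2 ≤ Real.arsinh (Real.exp (-A / (2 * ε))) := by
      have := lt_of_lt_of_le hbδ (min_le_right _ _); linarith
    calc Real.sinh (b / 2) ≤ Real.sinh (Real.arsinh (Real.exp (-A / (2 * ε)))) :=
          Real.sinh_le_sinh.2 this
      _ = Real.exp (-A / (2 * ε)) := Real.sinh_arsinh _
  have hs_le : s ≤ Real.exp (-A / ε) := by
    have h1 := hsinh_le _ hb₁0 hb₁δ
    have h2 := hsinh_le _ hb₂0 hb₂δ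
    have hee : Real.exp (-A / (2 * ε)) * Real.exp (-A / (2 * ε)) = Real.exp (-A / ε) := by
      rw [← Real.exp_add]; congr 1; field_simp; ring
    calc s ≤ Real.exp (-A / (2 * ε)) * Real.exp (-A / (2 * ε)) :=
          mul_le_mul h1 h2 (hsinh_pos _ hb₂0).le (Real.exp_pos _).le
      _ = _ := hee
  have hlogs : Real.log s ≤ -A / ε := (Real.log_le_iff_le_exp hs0).2 hs_le
  have hs1 : s ≤ 1 := by
    refine hs_le.trans ?_
    rw [← Real.exp_zero]
    apply Real.exp_le_exp.2
    rw [neg_div]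
    have : 0 ≤ A / ε := div_nonneg hA0 hε.le
    linarith
  set K : ℝ := Real.cosh (b₁ / 2) * Real.cosh (b₂ / 2) with hKdef
  have hK1 : 1 ≤ K :=
    one_le_mul_of_one_le_of_one_le (Real.one_le_cosh _) (Real.one_le_cosh _)
  have hcosh_le : ∀ b : ℝ, 0 < b → b < min 1 (2 * Real.arsinh (Real.exp (-A / (2 * ε)))) →
      Real.cosh (b / 2) ≤ Real.cosh (1 / 2 : ℝ) := by
    intro b hb hbδ
    have hb1 : b < 1 := lt_of_lt_of_le hbδ (min_le_left _ _)
    rw [Real.cosh_le_cosh, abs_of_pos (by linarith), abs_of_pos (by norm_num)]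
    linarith
  have hKB : K ≤ Real.cosh (1 / 2 : ℝ) ^ 2 := by
    have h1 := hcosh_le _ hb₁0 hb₁δ
    have h2 := hcosh_le _ hb₂0 hb₂δ
    have h3 := Real.one_le_cosh (b₂ / 2)
    nlinarith [Real.one_le_cosh (1/2 : ℝ)]
  set x : ℝ := (Real.cosh (c / 2) + K) / s with hxdef
  set x' : ℝ := (Real.cosh (c' / 2) + K) / s with hx'def
  have hx_lo : 2 / s ≤ x := by
    rw [hxdef]
    apply (div_le_div_iff_of_pos_right hs0).2
    have := Real.one_le_cosh (c / 2); linarith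
  have hcc' : Real.cosh (c' / 2) ≤ Real.cosh (C / 2) := by
    rw [Real.cosh_le_cosh, abs_of_nonneg (by linarith : (0:ℝ) ≤ c' / 2),
      abs_of_nonneg (by linarith : (0:ℝ) ≤ C / 2)]
    linarith
  have hx'_hi : x' ≤ B / s := by
    rw [hx'def]
    exact (div_le_div_iff_of_pos_right hs0).2 (by rw [hBdef]; exact add_le_add hcc' hKB)
  have hx0 : 0 < x := lt_of_lt_of_le (by positivity) hx_lo
  have hx'0 : 0 < x' := by
    rw [hx'def]
    have := Real.one_le_cosh (c' / 2)
    positivity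
  -- lower bound for ℓ c
  have hL_lo : Real.log (2 / s) ≤ Real.log (x + Real.sqrt (x ^ 2 - 1)) := by
    apply Real.log_le_log (by positivity)
    have := Real.sqrt_nonneg (x ^ 2 - 1)
    linarith
  -- upper bound for ℓ c'
  have hL'_hi : Real.log (x' + Real.sqrt (x' ^ 2 - 1)) ≤ Real.log (2 * (B / s)) := by
    apply Real.log_le_log (by positivity)
    have hsq : Real.sqrt (x' ^ 2 - 1) ≤ x' := by
      calc Real.sqrt (x' ^ 2 - 1) ≤ Real.sqrt (x' ^ 2) :=
            Real.sqrt_le_sqrt (by linarith)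
        _ = x' := by rw [Real.sqrt_sq hx'0.le]
    linarith
  have hlog2s : Real.log (2 / s) = Real.log 2 - Real.log s :=
    Real.log_div (by norm_num) hs0.ne'
  have hlogBs : Real.log (2 * (B / s)) = A - Real.log s := by
    rw [show 2 * (B / s) = (2 * B) / s by ring,
      Real.log_div (by positivity) hs0.ne', hAdef]
  have hLpos : 0 < Real.log (2 / s) := by
    apply Real.log_pos
    rw [lt_div_iff₀ hs0]; linarith
  have hlog2 : 0 < Real.log 2 := Real.log_pos (by norm_num)
  -- main chain
  have hεlogs : ε * Real.log s ≤ -A := by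
    have h := mul_le_mul_of_nonneg_left hlogs hε.le
    have h2 : ε * (-A / ε) = -A := by field_simp
    linarith
  have key : Real.log (x' + Real.sqrt (x' ^ 2 - 1)) ≤
      (1 + ε) * Real.log (x + Real.sqrt (x ^ 2 - 1)) := by
    calc Real.log (x' + Real.sqrt (x' ^ 2 - 1)) ≤ A - Real.log s := by
          rw [← hlogBs]; exact hL'_hi
      _ ≤ (1 + ε) * (Real.log 2 - Real.log s) := by
          have hεl2 : 0 ≤ ε * Real.log 2 := mul_nonneg hε.le hlog2.le
          have hexp : (1 + ε) * (Real.log 2 - Real.log s) =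
              Real.log 2 + ε * Real.log 2 - Real.log s - ε * Real.log s := by ring
          rw [hexp]
          linarith
      _ = (1 + ε) * Real.log (2 / s) := by rw [hlog2s]
      _ ≤ (1 + ε) * Real.log (x + Real.sqrt (x ^ 2 - 1)) :=
          mul_le_mul_of_nonneg_left hL_lo (by linarith)
  have hLpos' : 0 < Real.log (x + Real.sqrt (x ^ 2 - 1)) := lt_of_lt_of_le hLpos hL_lo
  rw [div_le_iff₀ hLpos']
  have hmax : (1:ℝ) ≤ max (c' / c) 1 := le_max_right _ _
  have hstep : (1 + ε) ≤ (1 + ε) * max (c' / c) 1 :=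
    le_mul_of_one_le_right (by linarith) hmax
  exact key.trans (mul_le_mul_of_nonneg_right hstep hLpos'.le)
end

section
/- There exists a constant C > 0 such that for all real numbers a, b ≥ 0 and all ℓ ≥ 1, setting t = cosh(a)·cosh(b)·cosh(ℓ) − sinh(a)·sinh(b), one has t ≥ 1 and | log( t + √(t² − 1) ) − (a + b + ℓ) | ≤ C. -/
open Real

lemma my_cosh_le_exp {x : ℝ} (hx : 0 ≤ x) : Real.cosh x ≤ Real.exp x := by
  rw [Real.cosh_eq]
  have : Real.exp (-x) ≤ Real.exp x := Real.exp_le_exp.2 (by linarith)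
  linarith

lemma my_exp_le_two_cosh (x : ℝ) : Real.exp x ≤ 2 * Real.cosh x := by
  rw [Real.cosh_eq]
  have : 0 < Real.exp (-x) := Real.exp_pos _
  linarith

/-- For a hyperbolic right-angled quadrilateral with sides `a, b, ℓ`, the fourth side
`L = arccosh t = log (t + √(t² − 1))` with `t = cosh a cosh b cosh ℓ − sinh a sinh b`
satisfies `L = a + b + ℓ + O(1)`, uniformly for `a, b ≥ 0` and `ℓ ≥ 1`. -/
theorem quadrilateral_side_O1 :
    ∃ C > 0, ∀ a b ℓ : ℝ, 0 ≤ a → 0 ≤ b → 1 ≤ ℓ →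
      (fun t : ℝ =>
          1 ≤ t ∧ |Real.log (t + Real.sqrt (t ^ 2 - 1)) - (a + b + ℓ)| ≤ C)
        (Real.cosh a * Real.cosh b * Real.cosh ℓ - Real.sinh a * Real.sinh b) := by
  refine ⟨4, by norm_num, ?_⟩
  intro a b ℓ ha hb hℓ
  set t := Real.cosh a * Real.cosh b * Real.cosh ℓ - Real.sinh a * Real.sinh b with ht
  have hca := Real.one_le_cosh a
  have hcb := Real.one_le_cosh b
  have hcl := Real.one_le_cosh ℓ
  have hsa : 0 ≤ Real.sinh a := Real.sinh_nonneg_iff.2 ha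
  have hsb : 0 ≤ Real.sinh b := Real.sinh_nonneg_iff.2 hb
  have hcab : (1:ℝ) ≤ Real.cosh a * Real.cosh b - Real.sinh a * Real.sinh b := by
    rw [← Real.cosh_sub]; exact Real.one_le_cosh _
  -- t ≥ 1
  have ht1 : 1 ≤ t := by
    nlinarith [mul_le_mul_of_nonneg_right hcab (by linarith : (0:ℝ) ≤ Real.cosh ℓ),
      le_mul_of_one_le_right (mul_nonneg hsa hsb) hcl]
  have htpos : 0 < t := by linarith
  -- e ≥ 2.7
  have he : (2.7:ℝ) < Real.exp 1 := by
    have := Real.exp_one_gt_d9; linarith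
  -- cosh ℓ ≥ 27/20
  have hclb : (27/20 : ℝ) ≤ Real.cosh ℓ := by
    have h1 : Real.exp 1 ≤ Real.exp ℓ := Real.exp_le_exp.2 hℓ
    have h2 := my_exp_le_two_cosh ℓ
    linarith
  -- lower bound: t ≥ (7/216) * exp (a+b+ℓ)
  have hlow : Real.exp (a + b + ℓ) ≤ (216/7 : ℝ) * t := by
    have h8 : Real.exp (a + b + ℓ) ≤ 8 * (Real.cosh a * Real.cosh b * Real.cosh ℓ) := by
      rw [Real.exp_add, Real.exp_add]
      have e1 := my_exp_le_two_cosh a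
      have e2 := my_exp_le_two_cosh b
      have e3 := my_exp_le_two_cosh ℓ
      have p1 : 0 < Real.exp a := Real.exp_pos a
      have p2 : 0 < Real.exp b := Real.exp_pos b
      have p3 : 0 < Real.exp ℓ := Real.exp_pos ℓ
      have h12 : Real.exp a * Real.exp b ≤ 2 * Real.cosh a * (2 * Real.cosh b) :=
        mul_le_mul e1 e2 p2.le (by positivity)
      have h123 : Real.exp a * Real.exp b * Real.exp ℓ
          ≤ 2 * Real.cosh a * (2 * Real.cosh b) * (2 * Real.cosh ℓ) :=
        mul_le_mul h12 e3 p3.le (by positivity)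
      nlinarith [h123]
    -- t ≥ cosh a cosh b (cosh ℓ - 1) ≥ (7/27) cosh a cosh b cosh ℓ
    have hcl7 : (7/27:ℝ) * Real.cosh ℓ ≤ Real.cosh ℓ - 1 := by linarith
    have hsab : Real.sinh a * Real.sinh b ≤ Real.cosh a * Real.cosh b := by nlinarith
    have hq : (7/27:ℝ) * (Real.cosh a * Real.cosh b * Real.cosh ℓ) ≤ t := by nlinarith
    linarith
  -- upper bound: t ≤ exp (a+b+ℓ)
  have hup : t ≤ Real.exp (a + b + ℓ) := by
    rw [Real.exp_add, Real.exp_add]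
    have e1 := my_cosh_le_exp ha
    have e2 := my_cosh_le_exp hb
    have e3 := my_cosh_le_exp (by linarith : (0:ℝ) ≤ ℓ)
    have p1 : 0 < Real.exp a := Real.exp_pos a
    have p2 : 0 < Real.exp b := Real.exp_pos b
    have h12 : Real.cosh a * Real.cosh b ≤ Real.exp a * Real.exp b :=
      mul_le_mul e1 e2 (by linarith) p1.le
    have h123 : Real.cosh a * Real.cosh b * Real.cosh ℓ
        ≤ Real.exp a * Real.exp b * Real.exp ℓ :=
      mul_le_mul h12 e3 (by linarith) (by positivity)
    nlinarith [mul_nonneg hsa hsb]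
  -- the sqrt bounds
  have hs0 : 0 ≤ Real.sqrt (t ^ 2 - 1) := Real.sqrt_nonneg _
  have hsle : Real.sqrt (t ^ 2 - 1) ≤ t := by
    have : Real.sqrt (t ^ 2 - 1) ≤ Real.sqrt (t ^ 2) :=
      Real.sqrt_le_sqrt (by nlinarith)
    rwa [Real.sqrt_sq (by linarith)] at this
  have hlog1 : Real.log t ≤ Real.log (t + Real.sqrt (t ^ 2 - 1)) :=
    Real.log_le_log (by linarith) (by linarith)
  have hlog2 : Real.log (t + Real.sqrt (t ^ 2 - 1)) ≤ Real.log (2 * t) :=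
    Real.log_le_log (by linarith) (by linarith)
  have hlogt_up : Real.log t ≤ a + b + ℓ := by
    calc Real.log t ≤ Real.log (Real.exp (a + b + ℓ)) :=
          Real.log_le_log htpos hup
      _ = a + b + ℓ := Real.log_exp _
  have hlogt_lo : a + b + ℓ - 4 ≤ Real.log t := by
    rw [← Real.log_exp (a + b + ℓ - 4)]
    apply Real.log_le_log (Real.exp_pos _)
    rw [show a + b + ℓ - 4 = (a + b + ℓ) + (-4) by ring, Real.exp_add]
    have he4 : (216/7:ℝ) ≤ Real.exp 4 := by
      have h4 : Real.exp 4 = (Real.exp 1) ^ 4 := by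
        rw [← Real.exp_nat_mul]; norm_num
      rw [h4]
      have h27 := pow_lt_pow_left₀ he (by norm_num : (0:ℝ) ≤ 2.7) (by norm_num : 4 ≠ 0)
      norm_num at h27 ⊢
      linarith
    have hexp4 : Real.exp (-4) * (216/7 : ℝ) ≤ 1 := by
      rw [Real.exp_neg]
      rw [inv_mul_le_iff₀ (Real.exp_pos 4)]
      linarith
    have hp : 0 < Real.exp (-4) := Real.exp_pos _
    calc Real.exp (a + b + ℓ) * Real.exp (-4)
        ≤ ((216/7:ℝ) * t) * Real.exp (-4) :=
          mul_le_mul_of_nonneg_right hlow hp.le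
      _ ≤ t := by nlinarith [mul_le_mul_of_nonneg_left hexp4 htpos.le]
  have hlog2t : Real.log (2 * t) = Real.log 2 + Real.log t := by
    rw [Real.log_mul (by norm_num) (by linarith)]
  have hl2 : Real.log 2 ≤ 1 := by
    have := Real.log_le_sub_one_of_pos (by norm_num : (0:ℝ) < 2)
    linarith
  refine ⟨ht1, abs_le.2 ⟨by linarith, by linarith⟩⟩
end
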